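/- For every h ∈ {1,…,k} and every p ∈ ℕ, the companion matrix satisfies the identity (−1)^{k−h} ∂(A(s)^p)/∂s_h = (∂(A(s)^p)/∂s_k) · A(s)^{k−h} as matrices with entries in ℂ[s_1,…,s_k]. -/

import Mathlib

open Matrix MvPolynomial

noncomputable section

/-- The polynomial ring `ℂ[s_1, …, s_k]` realized as `MvPolynomial (Fin k) ℂ`:
the variable of index `i` is `s_{i+1}`. -/
abbrev SRing (k : ℕ) : Type := MvPolynomial (Fin k) ℂ

/-- The companion matrix `A(s)` of `P_s(z) = Σ_{h=0}^{k} (−1)^h s_h z^{k−h}` (with `s_0 = 1`),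
with entries in `ℂ[s_1, …, s_k]`: `A(s)_{i,i+1} = 1` for `1 ≤ i ≤ k−1` and the last row is
`((−1)^{k−1} s_k, …, s_1)`. -/
def LA (k : ℕ) : Matrix (Fin k) (Fin k) (SRing k) := fun i j =>
  if (i : ℕ) = k - 1 then
    (-1 : SRing k) ^ (k - 1 - (j : ℕ)) *
      MvPolynomial.X (⟨k - 1 - (j : ℕ), by have := j.isLt; omega⟩ : Fin k)
  else if (j : ℕ) = (i : ℕ) + 1 then 1 else 0

namespace CompanionAux

variable {k : ℕ}

/-- Leibniz rule for entrywise `pderiv` on matrix products. -/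
lemma map_pderiv_mul (v : Fin k) (M N : Matrix (Fin k) (Fin k) (SRing k)) :
    (M * N).map (fun q => pderiv v q)
      = M.map (fun q => pderiv v q) * N + M * N.map (fun q => pderiv v q) := by
  ext i j : 1
  simp only [Matrix.map_apply, Matrix.mul_apply, map_sum, pderiv_mul, Matrix.add_apply,
    Finset.sum_add_distrib]

lemma map_pderiv_one (v : Fin k) :
    (1 : Matrix (Fin k) (Fin k) (SRing k)).map (fun q => pderiv v q) = 0 := by
  ext i j : 1
  by_cases hij : i = j <;> simp [Matrix.one_apply, hij, pderiv_one]

/-- `∂A/∂s_h` is `(−1)^{h−1}` in position `(k−1, k−h)`. -/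
lemma map_pderiv_LA (hk : 2 ≤ k) (h : ℕ) (h1 : 1 ≤ h) (h2 : h ≤ k) :
    (LA k).map (fun q => pderiv (⟨h - 1, Nat.sub_one_lt_of_le h1 h2⟩ : Fin k) q)
      = Matrix.single (⟨k - 1, Nat.sub_one_lt (by omega)⟩ : Fin k) (⟨k - h, by omega⟩ : Fin k)
          ((-1 : SRing k) ^ (h - 1)) := by
  ext i j : 1
  rw [Matrix.map_apply, LA]
  by_cases hi : (i : ℕ) = k - 1
  · rw [if_pos hi]
    have hC : ((-1 : SRing k) ^ (k - 1 - (j : ℕ)))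
        = MvPolynomial.C ((-1 : ℂ) ^ (k - 1 - (j : ℕ))) := by
      rw [map_pow, map_neg, MvPolynomial.C_1]
    rw [hC, pderiv_C_mul]
    by_cases hj : (j : ℕ) = k - h
    · have hvar : (⟨k - 1 - (j : ℕ), by have := j.isLt; omega⟩ : Fin k)
          = (⟨h - 1, Nat.sub_one_lt_of_le h1 h2⟩ : Fin k) := by
        apply Fin.ext; simp; omega
      rw [hvar, pderiv_X_self]
      have hii : i = (⟨k - 1, Nat.sub_one_lt (by omega)⟩ : Fin k) := Fin.ext hi
      have hjj : j = (⟨k - h, by omega⟩ : Fin k) := Fin.ext hj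
      have hrhs : Matrix.single (⟨k - 1, Nat.sub_one_lt (by omega)⟩ : Fin k) (⟨k - h, by omega⟩ : Fin k)
          ((-1 : SRing k) ^ (h - 1)) i j = (-1 : SRing k) ^ (h - 1) := by
        simp only [Matrix.single, Matrix.of_apply]
        rw [if_pos ⟨hii.symm, hjj.symm⟩]
      rw [hrhs]
      have heq : k - 1 - (j : ℕ) = h - 1 := by omega
      rw [heq, mul_one, map_pow, map_neg, MvPolynomial.C_1]
    · have hvar : (⟨k - 1 - (j : ℕ), by have := j.isLt; omega⟩ : Fin k)
          ≠ (⟨h - 1, Nat.sub_one_lt_of_le h1 h2⟩ : Fin k) := by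
        intro hcon
        have hval : k - 1 - (j : ℕ) = h - 1 := Fin.mk.inj_iff.mp hcon
        have := j.isLt; omega
      rw [pderiv_X_of_ne hvar, mul_zero]
      have hjj : j ≠ (⟨k - h, by omega⟩ : Fin k) := by
        intro hcon; exact hj (by rw [hcon])
      rw [Matrix.single_apply_of_ne]
      tauto
  · rw [if_neg hi]
    have hii : i ≠ (⟨k - 1, Nat.sub_one_lt (by omega)⟩ : Fin k) := by
      intro hcon; exact hi (by rw [hcon])
    rw [Matrix.single_apply_of_ne (h := by tauto)]
    by_cases hj : (j : ℕ) = (i : ℕ) + 1 <;> simp [hj, pderiv_one]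

/-- Shifting: `E_{k-1,0} · A^m = E_{k-1,m}` for `m ≤ k-1`. -/
lemma stdBasis_shift (hk : 2 ≤ k) (c : SRing k) (m : ℕ) (hm : m ≤ k - 1) :
    Matrix.single (⟨k - 1, Nat.sub_one_lt (by omega)⟩ : Fin k) (⟨0, by omega⟩ : Fin k) c * LA k ^ m
      = Matrix.single (⟨k - 1, Nat.sub_one_lt (by omega)⟩ : Fin k) (⟨m, by omega⟩ : Fin k) c := by
  induction m with
  | zero => simp
  | succ n ih =>
    have hn : n ≤ k - 1 := by omega
    rw [pow_succ, ← Matrix.mul_assoc, ih hn]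
    ext a b
    by_cases ha : a = (⟨k - 1, Nat.sub_one_lt (by omega)⟩ : Fin k)
    · subst ha
      rw [Matrix.single_mul_apply_same]
      rw [LA]
      have hrow : ((⟨n, by omega⟩ : Fin k) : ℕ) ≠ k - 1 := by simp; omega
      rw [if_neg hrow]
      by_cases hb : (b : ℕ) = n + 1
      · have hbb : b = (⟨n + 1, by omega⟩ : Fin k) := Fin.ext hb
        rw [hbb, Matrix.single_apply_same]
        simp [hb]
      · have hbb : b ≠ (⟨n + 1, by omega⟩ : Fin k) := by
          intro hcon; exact hb (by rw [hcon])
        rw [Matrix.single_apply_of_ne (h := by tauto)]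
        simp [hb]
    · rw [Matrix.single_mul_apply_of_ne (a := a) (b := b) (h := ha),
        Matrix.single_apply_of_ne (h := by tauto)]

/-- Base case of the key identity: `(−1)^{k−h} ∂A/∂s_h = (∂A/∂s_k) A^{k−h}`. -/
lemma key_base (hk : 2 ≤ k) (h : ℕ) (h1 : 1 ≤ h) (h2 : h ≤ k) :
    ((-1 : SRing k) ^ (k - h)) •
        (LA k).map (fun q => pderiv (⟨h - 1, Nat.sub_one_lt_of_le h1 h2⟩ : Fin k) q)
      = ((LA k).map (fun q => pderiv (⟨k - 1, Nat.sub_one_lt (by omega)⟩ : Fin k) q)) * LA k ^ (k - h) := by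
  rw [map_pderiv_LA hk h h1 h2, map_pderiv_LA hk k (by omega) le_rfl]
  have h0 : (⟨k - k, by omega⟩ : Fin k) = (⟨0, by omega⟩ : Fin k) := by
    apply Fin.ext; simp
  rw [h0, stdBasis_shift hk _ (k - h) (by omega), Matrix.smul_single, smul_eq_mul,
    ← pow_add]
  have he : k - h + (h - 1) = k - 1 := by omega
  rw [he]

end CompanionAux

/-- `(−1)^{k−h} ∂(A(s)^p)/∂s_h = (∂(A(s)^p)/∂s_k) · A(s)^{k−h}`
for all `h ∈ {1, …, k}` and all `p ∈ ℕ`, as matrices over `ℂ[s_1, …, s_k]`. -/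
theorem companion_pow_pderiv_identity
    (k : ℕ) (hk : 2 ≤ k) (h : ℕ) (h1 : 1 ≤ h) (h2 : h ≤ k) (p : ℕ) :
    ((-1 : SRing k) ^ (k - h)) •
        (LA k ^ p).map (fun q => MvPolynomial.pderiv (⟨h - 1, by omega⟩ : Fin k) q)
      = ((LA k ^ p).map (fun q => MvPolynomial.pderiv (⟨k - 1, by omega⟩ : Fin k) q))
          * LA k ^ (k - h) := by
  induction p with
  | zero =>
    rw [pow_zero, CompanionAux.map_pderiv_one, CompanionAux.map_pderiv_one, smul_zero, zero_mul]
  | succ p ih =>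
    rw [pow_succ, CompanionAux.map_pderiv_mul, CompanionAux.map_pderiv_mul, smul_add, add_mul,
      ← smul_mul_assoc, ih, ← mul_smul_comm, CompanionAux.key_base hk h h1 h2,
      Matrix.mul_assoc, Matrix.mul_assoc, Matrix.mul_assoc]
    have hcomm : LA k ^ (k - h) * LA k = LA k * LA k ^ (k - h) := by
      rw [← pow_succ, ← pow_succ']
    rw [hcomm]
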